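/- Let λ be a cardinal of countable cofinality, with square sequence ⟨C_δ : δ < λ⁺ limit⟩ (C_δ ⊆ δ club, |C_δ| < λ⁺ is strengthened to |C_δ| < λ, and coherence: if γ is a limit point of C_δ then C_γ = γ ∩ C_δ), cardinals λ_n ↗ λ, and injections φ_{α,β} : [α,β) → λ for α < β < λ⁺. Call a countable A ⊆ λ⁺ of limit order type 'low' if, setting δ = sup A and ⟨c_ξ⟩ the increasing enumeration of C_δ, there is n < ω with φ_{c_ξ, c_{ξ+1}}(a) < λ_n whenever a ∈ A and c_ξ ≤ a < c_{ξ+1}. Then for every B ⊆ λ⁺ of order type ω₁ there is a cofinal B' ⊆ B such that for every limit point γ < sup(B') of B', the set B' ∩ γ is low. -/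

import Mathlib

open Cardinal

/-- `γ` is a limit point of the set of ordinals `s`. -/
def IsLimitPt (s : Set Ordinal) (γ : Ordinal) : Prop :=
  0 < γ ∧ ∀ β < γ, ∃ c ∈ s, β < c ∧ c < γ

/-- `c, c'` are consecutive elements of the set of ordinals `s`. -/
def Consec (s : Set Ordinal) (c c' : Ordinal) : Prop :=
  c ∈ s ∧ c' ∈ s ∧ c < c' ∧ ∀ x ∈ s, ¬ (c < x ∧ x < c')

/-- `A` is low: it is countable of limit order type, and with `δ = sup A` there
is `n < ω` such that `φ_{c_ξ,c_{ξ+1}}(a) < λ_n` whenever `a ∈ A` lies between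
consecutive elements `c_ξ ≤ a < c_{ξ+1}` of `C_δ`. -/
def IsLow (C : Ordinal → Set Ordinal) (l : ℕ → Cardinal)
    (phi : Ordinal → Ordinal → Ordinal → Ordinal) (A : Set Ordinal) : Prop :=
  A.Countable ∧ Order.IsSuccLimit (Ordinal.type ((· < ·) : ↥A → ↥A → Prop)) ∧
  ∃ n : ℕ, ∀ a ∈ A, ∀ c c', Consec (C (sSup A)) c c' → c ≤ a → a < c' →
    phi c c' a < (l n).ord

lemma consec_unique {s : Set Ordinal} {c1 c1' c2 c2' a : Ordinal}
    (h1 : Consec s c1 c1') (h2 : Consec s c2 c2')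
    (ha1 : c1 ≤ a) (ha1' : a < c1') (ha2 : c2 ≤ a) (ha2' : a < c2') :
    c1 = c2 ∧ c1' = c2' := by
  obtain ⟨m1, m1', lt1, H1⟩ := h1
  obtain ⟨m2, m2', lt2, H2⟩ := h2
  have hc : c1 = c2 := by
    rcases lt_trichotomy c1 c2 with h | h | h
    · exact absurd ⟨h, lt_of_le_of_lt ha2 ha1'⟩ (H1 c2 m2)
    · exact h
    · exact absurd ⟨h, lt_of_le_of_lt ha1 ha2'⟩ (H2 c1 m1)
  refine ⟨hc, ?_⟩
  rcases lt_trichotomy c1' c2' with h | h | h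
  · exact absurd ⟨lt_of_le_of_lt ha2 ha1', h⟩ (H2 c1' m1')
  · exact h
  · exact absurd ⟨lt_of_le_of_lt ha1 ha2', h⟩ (H1 c2' m2')

lemma type_isLimit_of_noMax {s : Set Ordinal} (hne : s.Nonempty)
    (hnm : ∀ a ∈ s, ∃ b ∈ s, a < b) :
    Order.IsSuccLimit (Ordinal.type ((· < ·) : ↥s → ↥s → Prop)) := by
  rw [Ordinal.isSuccLimit_iff, Order.isSuccPrelimit_iff_succ_lt]
  constructor
  · rw [Ordinal.type_ne_zero_iff_nonempty]
    exact hne.to_subtype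
  · intro a ha
    obtain ⟨x, hx⟩ := Ordinal.typein_surj ((· < ·) : ↥s → ↥s → Prop) ha
    obtain ⟨b, hb, hxb⟩ := hnm x.1 x.2
    have hlt : a < Ordinal.typein ((· < ·) : ↥s → ↥s → Prop) ⟨b, hb⟩ := by
      rw [← hx]
      exact (Ordinal.typein_lt_typein _).2 hxb
    exact lt_of_le_of_lt (Order.succ_le_of_lt hlt) (Ordinal.typein_lt_type _ _)

lemma countable_of_bounded_in {B A : Set Ordinal} (hAB : A ⊆ B)
    (htype : Ordinal.type ((· < ·) : ↥B → ↥B → Prop) = (Cardinal.aleph 1 : Cardinal.{1}).ord)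
    {b0 : Ordinal} (hb0 : b0 ∈ B) (hbd : ∀ a ∈ A, a < b0) : A.Countable := by
  rw [Cardinal.countable_iff_lt_aleph_one A]
  have hinj : Function.Injective
      (fun a : ↥A => (⟨⟨a.1, hAB a.2⟩, hbd a.1 a.2⟩ :
        {y : ↥B // ((· < ·) : ↥B → ↥B → Prop) y ⟨b0, hb0⟩})) := by
    intro a b hab
    ext
    exact congrArg (fun z => z.1.1) hab
  have h1 : #A ≤ #{y : ↥B // ((· < ·) : ↥B → ↥B → Prop) y ⟨b0, hb0⟩} :=
    Cardinal.mk_le_of_injective hinj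
  have h2 : #{y : ↥B // ((· < ·) : ↥B → ↥B → Prop) y ⟨b0, hb0⟩}
      = (Ordinal.typein ((· < ·) : ↥B → ↥B → Prop) ⟨b0, hb0⟩).card :=
    (Ordinal.card_typein _).symm
  have h3 : Ordinal.typein ((· < ·) : ↥B → ↥B → Prop) ⟨b0, hb0⟩ < (aleph 1).ord := by
    rw [← htype]; exact Ordinal.typein_lt_type _ _
  exact h1.trans_lt (h2 ▸ Cardinal.lt_ord.1 h3)

/-- Given `cf(λ) = ω`, a `□_λ`-sequence `⟨C_δ⟩` (with `|C_δ| < λ`), cardinals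
`λ_n ↗ λ` and injections `φ_{α,β} : [α,β) → λ`: every `B ⊆ λ⁺` of order type
`ω₁` has a cofinal subset `B'` all of whose proper initial segments at limit
points are low. -/
theorem stmt14 (lam : Cardinal.{0}) (hlam : ℵ₀ ≤ lam) (hcf : lam.ord.cof = ℵ₀)
    (C : Ordinal → Set Ordinal)
    (hCsub : ∀ δ, δ < (Order.succ lam).ord → Order.IsSuccLimit δ → C δ ⊆ Set.Iio δ)
    (hCunb : ∀ δ, δ < (Order.succ lam).ord → Order.IsSuccLimit δ →
      ∀ β < δ, ∃ c ∈ C δ, β < c)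
    (hCcl : ∀ δ, δ < (Order.succ lam).ord → Order.IsSuccLimit δ →
      ∀ γ < δ, IsLimitPt (C δ) γ → γ ∈ C δ)
    (hCcard : ∀ δ, δ < (Order.succ lam).ord → Order.IsSuccLimit δ →
      #(C δ) < Cardinal.lift.{1} lam)
    (hCcoh : ∀ δ, δ < (Order.succ lam).ord → Order.IsSuccLimit δ →
      ∀ γ < δ, IsLimitPt (C δ) γ → C γ = C δ ∩ Set.Iio γ)
    (l : ℕ → Cardinal) (hl : StrictMono l) (hlsup : (⨆ n, l n) = lam)
    (phi : Ordinal → Ordinal → Ordinal → Ordinal)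
    (hphiInj : ∀ α β, α < β → β < (Order.succ lam).ord →
      Set.InjOn (phi α β) (Set.Ico α β))
    (hphiLt : ∀ α β, α < β → β < (Order.succ lam).ord →
      ∀ x ∈ Set.Ico α β, phi α β x < lam.ord) :
    ∀ B : Set Ordinal, B ⊆ Set.Iio (Order.succ lam).ord →
      Ordinal.type ((· < ·) : ↥B → ↥B → Prop) = (Cardinal.aleph 1 : Cardinal.{1}).ord →
      ∃ B', B' ⊆ B ∧ (∀ b ∈ B, ∃ b' ∈ B', b ≤ b') ∧
        ∀ γ, γ < sSup B' → IsLimitPt B' γ → IsLow C l phi (B' ∩ Set.Iio γ) := by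

  intro B hBsub htype
  set o := (Order.succ lam).ord with ho
  have htypene : Ordinal.type ((· < ·) : ↥B → ↥B → Prop) ≠ 0 := by
    rw [htype, Ne, Cardinal.ord_eq_zero]
    exact (Cardinal.aleph_pos 1).ne'
  have hBne : B.Nonempty := Set.nonempty_coe_sort.1 (Ordinal.type_ne_zero_iff_nonempty.1 htypene)
  have hBbdd : BddAbove B := ⟨o, fun b hb => (hBsub hb).le⟩
  -- no maximum in B
  have hBnomax : ∀ b ∈ B, ∃ b' ∈ B, b < b' := by
    intro b hb
    have h1 : Ordinal.typein ((· < ·) : ↥B → ↥B → Prop) ⟨b, hb⟩ <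
        Ordinal.type ((· < ·) : ↥B → ↥B → Prop) := Ordinal.typein_lt_type _ _
    have hlim : Order.IsSuccLimit (Ordinal.type ((· < ·) : ↥B → ↥B → Prop)) := by
      rw [htype]
      exact Cardinal.isSuccLimit_ord (aleph0_le_aleph 1)
    have h2 := hlim.succ_lt h1
    obtain ⟨x, hx⟩ := Ordinal.typein_surj ((· < ·) : ↥B → ↥B → Prop) h2
    refine ⟨x.1, x.2, ?_⟩
    have : Ordinal.typein ((· < ·) : ↥B → ↥B → Prop) ⟨b, hb⟩ <
        Ordinal.typein ((· < ·) : ↥B → ↥B → Prop) x := by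
      rw [hx]; exact Order.lt_succ _
    exact (Ordinal.typein_lt_typein ((· < ·) : ↥B → ↥B → Prop)).1 this
  set δ := sSup B with hδ
  have hbδ : ∀ b ∈ B, b < δ := by
    intro b hb
    obtain ⟨b', hb', hbb'⟩ := hBnomax b hb
    exact hbb'.trans_le (le_csSup hBbdd hb')
  have hδunb : ∀ β < δ, ∃ b ∈ B, β < b := by
    intro β hβ
    exact (lt_csSup_iff hBbdd hBne).1 hβ
  have hδlim : Order.IsSuccLimit δ := by
    rw [Ordinal.isSuccLimit_iff, Order.isSuccPrelimit_iff_succ_lt]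
    constructor
    · obtain ⟨b, hb⟩ := hBne
      exact ((zero_le (a := b)).trans_lt (hbδ b hb)).ne'
    · intro a ha
      obtain ⟨b, hb, hab⟩ := hδunb a ha
      exact lt_of_le_of_lt (Order.succ_le_of_lt hab) (hbδ b hb)
  -- ℵ₀ < lam
  have homegao : (Ordinal.omega0 : Ordinal) < o := by
    rw [ho, Cardinal.lt_ord, Ordinal.card_omega0]
    exact hlam.trans_lt (Order.lt_succ lam)
  have haleph0lam : ℵ₀ < lam := by
    have hCinf : (C Ordinal.omega0).Infinite := by
      by_contra hfin
      rw [Set.not_infinite] at hfin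
      have hne : (C Ordinal.omega0).Nonempty := by
        obtain ⟨c, hc, _⟩ := hCunb _ homegao Ordinal.isSuccLimit_omega0 0 Ordinal.omega0_pos
        exact ⟨c, hc⟩
      have hmem : sSup (C Ordinal.omega0) ∈ C Ordinal.omega0 := hne.csSup_mem hfin
      have hlt : sSup (C Ordinal.omega0) < Ordinal.omega0 :=
        hCsub _ homegao Ordinal.isSuccLimit_omega0 hmem
      obtain ⟨c, hc, hcgt⟩ := hCunb _ homegao Ordinal.isSuccLimit_omega0 _ hlt
      exact absurd (le_csSup hfin.bddAbove hc) (not_le.2 hcgt)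
    have h1 : ℵ₀ ≤ #(C Ordinal.omega0) := Cardinal.infinite_iff.1 hCinf.to_subtype
    have h2 : (ℵ₀ : Cardinal.{1}) < Cardinal.lift.{1} lam :=
      h1.trans_lt (hCcard _ homegao Ordinal.isSuccLimit_omega0)
    rwa [← Cardinal.lift_aleph0.{1,0}, Cardinal.lift_lt] at h2
  have haleph1lam : (aleph 1 : Cardinal.{0}) ≤ lam := by
    rw [← Cardinal.succ_aleph0, Order.succ_le_iff]
    exact haleph0lam
  -- δ < o
  have hδo : δ < o := by
    have hsmall : Small.{0} ↥B := small_subset hBsub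
    have hcardB : #(↥B) = (aleph 1 : Cardinal.{1}) := by
      rw [← Ordinal.card_type ((· < ·) : ↥B → ↥B → Prop), htype, Cardinal.card_ord]
    have hmkshr : #(Shrink.{0} ↥B) = (aleph 1 : Cardinal.{0}) := by
      have h2 : Cardinal.lift.{1} #(Shrink.{0} ↥B) = Cardinal.lift.{1} (aleph 1 : Cardinal.{0}) := by
        rw [Cardinal.lift_mk_shrink''.{1,0} ↥B, hcardB]
        simp [Cardinal.lift_aleph]
      exact Cardinal.lift_injective h2
    have hcof : o.cof = Order.succ lam := (Cardinal.isRegular_succ hlam).cof_eq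
    have hsup : (⨆ x : Shrink.{0} ↥B, ((equivShrink ↥B).symm x).1) < o := by
      apply Ordinal.iSup_lt_ord
      · rw [hmkshr, hcof]
        exact haleph1lam.trans_lt (Order.lt_succ lam)
      · intro i
        exact hBsub ((equivShrink ↥B).symm i).2
    haveI : Nonempty ↥B := hBne.to_subtype
    haveI : Nonempty (Shrink.{0} ↥B) := ⟨equivShrink ↥B (Classical.choice ‹_›)⟩
    have heq : (⨆ x : Shrink.{0} ↥B, ((equivShrink ↥B).symm x).1) = δ := by
      apply le_antisymm
      · exact ciSup_le fun i => le_csSup hBbdd ((equivShrink ↥B).symm i).2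
      · apply csSup_le hBne
        intro b hb
        have h := le_ciSup (f := fun x : Shrink.{0} ↥B => ((equivShrink ↥B).symm x).1)
          (Ordinal.bddAbove_range _) (equivShrink ↥B ⟨b, hb⟩)
        simpa using h
    rwa [heq] at hsup
  have hCδsub := hCsub δ hδo hδlim
  have hCδunb := hCunb δ hδo hδlim
  -- the partition property
  have hbddl : BddAbove (Set.range l) := by
    by_contra h
    have h0 : lam = 0 := by
      rw [← hlsup, iSup, csSup_of_not_bddAbove h, csSup_empty]
      rfl
    rw [h0, nonpos_iff_eq_zero] at hlam
    exact Cardinal.aleph0_ne_zero hlam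
  set P : ℕ → Ordinal → Prop := fun n b =>
    ∀ c c', Consec (C δ) c c' → c ≤ b → b < c' → phi c c' b < (l n).ord with hP
  have hexP : ∀ b < δ, ∃ n, P n b := by
    intro b hb
    by_cases hex : ∃ c c', Consec (C δ) c c' ∧ c ≤ b ∧ b < c'
    · obtain ⟨c, c', hcc, hcb, hbc⟩ := hex
      have hc'δ : c' < δ := hCδsub hcc.2.1
      have hphival : phi c c' b < lam.ord :=
        hphiLt c c' hcc.2.2.1 (hc'δ.trans hδo) b ⟨hcb, hbc⟩
      have hcard : (phi c c' b).card < ⨆ n, l n := by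
        rw [hlsup]; exact Cardinal.lt_ord.1 hphival
      obtain ⟨n, hn⟩ := (lt_ciSup_iff hbddl).1 hcard
      refine ⟨n, fun d d' hdd hdb hbd => ?_⟩
      obtain ⟨hd, hd'⟩ := consec_unique hdd hcc hdb hbd hcb hbc
      rw [hd, hd']
      exact Cardinal.lt_ord.2 hn
    · exact ⟨0, fun c c' h1 h2 h3 => absurd ⟨c, c', h1, h2, h3⟩ hex⟩
  -- a cofinal piece with uniform n
  have hTcof : ∃ N, ∀ β < δ, ∃ b, (b ∈ B ∧ P N b) ∧ β < b := by
    by_contra h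
    push_neg at h
    choose β hβδ hβbd using h
    choose bb hbbB hbbgt using fun n => hδunb (β n) (hβδ n)
    set t : ℕ → Ordinal.{1} := fun n =>
      Ordinal.typein ((· < ·) : ↥B → ↥B → Prop) ⟨bb n, hbbB n⟩ with ht
    have htlt : ∀ n, t n < (aleph 1 : Cardinal.{1}).ord := fun n => by
      rw [← htype]; exact Ordinal.typein_lt_type _ _
    have hsup : (⨆ n, t n) < (aleph 1 : Cardinal.{1}).ord := by
      apply Ordinal.iSup_lt_ord_lift _ htlt
      rw [Cardinal.isRegular_aleph_one.cof_eq]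
      simp [aleph0_lt_aleph_one]
    rw [← htype] at hsup
    obtain ⟨x, hx⟩ := Ordinal.typein_surj ((· < ·) : ↥B → ↥B → Prop) hsup
    have hxge : ∀ n, bb n ≤ x.1 := by
      intro n
      have h1 : t n ≤ ⨆ n, t n := le_ciSup (Ordinal.bddAbove_range _) n
      rw [← hx] at h1
      have := (Ordinal.typein_le_typein ((· < ·) : ↥B → ↥B → Prop)).1 h1
      exact not_lt.1 (fun hc => this hc)
    obtain ⟨n, hn⟩ := hexP x.1 (hbδ x.1 x.2)
    have := hβbd n x.1 ⟨x.2, hn⟩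
    exact absurd ((hbbgt n).trans_le (hxge n)) (not_lt.2 this)
  obtain ⟨N, hN⟩ := hTcof
  set T : Set Ordinal := {b | b ∈ B ∧ P N b} with hT
  -- B' : least elements of T above points of C δ
  have hSne : ∀ c < δ, {b | b ∈ T ∧ c ≤ b}.Nonempty := by
    intro c hc
    obtain ⟨b, hbT, hcb⟩ := hN c hc
    exact ⟨b, hbT, hcb.le⟩
  set lc : Ordinal → Ordinal := fun c => sInf {b | b ∈ T ∧ c ≤ b} with hlc
  have hlcmem : ∀ c < δ, lc c ∈ T ∧ c ≤ lc c := fun c hc => csInf_mem (hSne c hc)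
  set B' : Set Ordinal := lc '' (C δ) with hB'
  have hB'T : B' ⊆ T := by
    rintro x ⟨c, hc, rfl⟩
    exact (hlcmem c (hCδsub hc)).1
  have hB'B : B' ⊆ B := fun x hx => (hB'T hx).1
  -- separation
  have hsep : ∀ x ∈ B', ∀ y ∈ B', x < y → ∃ c ∈ C δ, x < c ∧ c ≤ y := by
    rintro x hx y ⟨c2, hc2, rfl⟩ hxy
    have hc2δ := hCδsub hc2
    refine ⟨c2, hc2, ?_, (hlcmem c2 hc2δ).2⟩
    by_contra hcx
    push_neg at hcx
    have : lc c2 ≤ x := csInf_le (OrderBot.bddBelow _) ⟨hB'T hx, hcx⟩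
    exact absurd hxy (not_lt.2 this)
  refine ⟨B', hB'B, ?_, ?_⟩
  · intro b hb
    obtain ⟨c, hc, hbc⟩ := hCδunb b (hbδ b hb)
    exact ⟨lc c, ⟨c, hc, rfl⟩, (hbc.trans_le (hlcmem c (hCδsub hc)).2).le⟩
  intro γ hγsup hγpt
  set A : Set Ordinal := B' ∩ Set.Iio γ with hA
  have hB'ne : B'.Nonempty := by
    by_contra h
    rw [Set.not_nonempty_iff_eq_empty] at h
    rw [h, csSup_empty] at hγsup
    exact absurd hγsup (not_lt_of_ge (zero_le (a := γ)))
  have hB'bdd : BddAbove B' := hBbdd.mono hB'B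
  obtain ⟨b0, hb0B', hγb0⟩ := (lt_csSup_iff hB'bdd hB'ne).1 hγsup
  have hγδ : γ < δ := hγb0.trans (hbδ b0 (hB'B hb0B'))
  -- γ is a limit point of C δ
  have hγCδ : IsLimitPt (C δ) γ := by
    refine ⟨hγpt.1, fun β hβ => ?_⟩
    obtain ⟨b1, hb1, hβb1, hb1γ⟩ := hγpt.2 β hβ
    obtain ⟨b2, hb2, hb1b2, hb2γ⟩ := hγpt.2 b1 hb1γ
    obtain ⟨c, hc, hb1c, hcb2⟩ := hsep b1 hb1 b2 hb2 hb1b2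
    exact ⟨c, hc, hβb1.trans hb1c, lt_of_le_of_lt hcb2 hb2γ⟩
  have hCγ : C γ = C δ ∩ Set.Iio γ := hCcoh δ hδo hδlim γ hγδ hγCδ
  have hAne : A.Nonempty := by
    obtain ⟨c, hc, h0c, hcγ⟩ := hγpt.2 0 hγpt.1
    exact ⟨c, hc, hcγ⟩
  have hAbdd : BddAbove A := ⟨γ, fun a ha => ha.2.le⟩
  have hsupA : sSup A = γ := by
    apply le_antisymm (csSup_le hAne fun a ha => ha.2.le)
    by_contra h
    push_neg at h
    obtain ⟨a, ha, hsa, haγ⟩ := hγpt.2 (sSup A) h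
    exact absurd (le_csSup hAbdd ⟨ha, haγ⟩) (not_le.2 hsa)
  refine ⟨?_, ?_, N, ?_⟩
  · exact countable_of_bounded_in (fun a ha => hB'B ha.1) htype (hB'B hb0B')
      (fun a ha => ha.2.trans hγb0)
  · apply type_isLimit_of_noMax hAne
    rintro a ⟨haB', haγ⟩
    obtain ⟨b, hb, hab, hbγ⟩ := hγpt.2 a haγ
    exact ⟨b, ⟨hb, hbγ⟩, hab⟩
  · intro a haA c c' hcc hca hac
    rw [hsupA, hCγ] at hcc
    obtain ⟨⟨hcCδ, hcγ'⟩, ⟨hc'Cδ, hc'γ⟩, hcc', hmax⟩ := hcc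
    have hconsec : Consec (C δ) c c' := by
      refine ⟨hcCδ, hc'Cδ, hcc', fun x hx ⟨h1, h2⟩ => ?_⟩
      exact hmax x ⟨hx, h2.trans hc'γ⟩ ⟨h1, h2⟩
    exact (hB'T haA.1).2 c c' hconsec hca hac
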